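/- For the correlation clustering instance on n+1 vertices with one center c, where all edges incident to c are positive and all other edges are negative, the assignment x_e = 1/2 for positive edges and x_e = 1 for negative edges is feasible for the standard LP and has objective value n/2. -/
import Mathlib


/-- For the star instance on `n+1` vertices (center `c = 0`, positive edges exactly those
incident to `c`, all other edges negative), the assignment `x_e = 1/2` on positive edges and
`x_e = 1` on negative edges is feasible for the standard LP and has objective value `n/2`. -/
theorem star_lp_solution (n : ℕ) :
    ∀ c : Fin (n + 1), c = 0 →
    ∀ x : Fin (n + 1) → Fin (n + 1) → ℝ,
      (x = fun u v => if u = v then 0 else if u = c ∨ v = c then 1/2 else 1) →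
      (∀ u v, x u v = x v u) ∧
      (∀ u, x u u = 0) ∧
      (∀ u v, 0 ≤ x u v ∧ x u v ≤ 1) ∧
      (∀ u v w, x u w ≤ x u v + x v w) ∧
      (∑ p ∈ Finset.univ.filter (fun p : Fin (n + 1) × Fin (n + 1) => p.1 < p.2),
          (if p.1 = c ∨ p.2 = c then x p.1 p.2 else 1 - x p.1 p.2)) = (n : ℝ) / 2 := by
  rintro c rfl x rfl
  refine ⟨?_, ?_, ?_, ?_, ?_⟩
  · intro u v; simp only
    split_ifs with h1 h2 h3 h4 h5 h6 h7 h8 <;> first | rfl | omega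
  · intro u; simp
  · intro u v; simp only
    split_ifs <;> norm_num
  · intro u v w; simp only
    split_ifs <;> subst_vars <;> norm_num <;> tauto
  · have key : ∀ p ∈ Finset.univ.filter (fun p : Fin (n + 1) × Fin (n + 1) => p.1 < p.2),
        (if p.1 = (0 : Fin (n+1)) ∨ p.2 = 0 then
          (fun u v : Fin (n+1) => if u = v then (0:ℝ) else if u = 0 ∨ v = 0 then 1/2 else 1) p.1 p.2
        else 1 - (fun u v : Fin (n+1) => if u = v then (0:ℝ) else if u = 0 ∨ v = 0 then 1/2 else 1) p.1 p.2)
        = (if p.1 = 0 then (1/2 : ℝ) else 0) := by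
      rintro ⟨a, b⟩ hp
      simp only [Finset.mem_filter] at hp
      have hab : a < b := hp.2
      have hne : a ≠ b := ne_of_lt hab
      have hb : b ≠ 0 := by
        intro h; rw [h] at hab; exact absurd hab (by simp [Fin.lt_def])
      by_cases ha : a = 0 <;> simp [ha, hb, hne, Ne.symm hb]
    rw [Finset.sum_congr rfl key, Finset.sum_filter, Fintype.sum_prod_type]
    have : ∀ a : Fin (n+1), (∑ b : Fin (n+1), if a < b then (if a = 0 then (1/2:ℝ) else 0) else 0)
        = if a = 0 then (n : ℝ)/2 else 0 := by
      intro a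
      by_cases ha : a = 0
      · subst ha
        have hcard : (Finset.univ.filter (fun b : Fin (n+1) => 0 < b)).card = n := by
          have h2 : (Finset.univ.filter (fun b : Fin (n+1) => 0 < b)) = Finset.univ \ {0} := by
            ext b; simp [Fin.pos_iff_ne_zero]
          rw [h2, Finset.card_sdiff_of_subset (Finset.subset_univ _)]
          simp
        rw [Finset.sum_ite, Finset.sum_const, Finset.sum_const, hcard]
        norm_num
        ring
      · simp [ha]
    rw [Finset.sum_congr rfl (fun a _ => this a)]
    simp
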